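/- Specializing to λ=1, μ=1, δ=0 and η ∈ ℝ with |η−1| ≥ (1−t²)/(3t²): if a₂, a₃, c₂, d₂ ∈ ℂ satisfy |c₂| ≤ 1, |d₂| ≤ 1, (2(1−t²)/t²)a₂² = 2t(c₂+d₂), and a₃ = a₂² + (t/3)(c₂−d₂), then |a₃ − η a₂²| ≤ 2|η−1|t³/(1−t²). -/

import Mathlib

theorem stmt_16 (t eta : ℝ) (ht : 1 / 2 < t ∧ t < 1)
    (heta : |eta - 1| ≥ (1 - t ^ 2) / (3 * t ^ 2))
    (a2 a3 c2 d2 : ℂ) (hc2 : ‖c2‖ ≤ 1) (hd2 : ‖d2‖ ≤ 1)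
    (h1 : ((2 * (1 - t ^ 2) / t ^ 2 : ℝ) : ℂ) * a2 ^ 2 = ((2 * t : ℝ) : ℂ) * (c2 + d2))
    (h2 : a3 = a2 ^ 2 + ((t / 3 : ℝ) : ℂ) * (c2 - d2)) :
    ‖a3 - (eta : ℂ) * a2 ^ 2‖ ≤ 2 * |eta - 1| * t ^ 3 / (1 - t ^ 2) := by
  obtain ⟨ht1, ht2⟩ := ht
  have htpos : (0:ℝ) < t := by linarith
  have h0 : (0:ℝ) < 1 - t ^ 2 := by nlinarith
  have hne : ((2 * (1 - t ^ 2) / t ^ 2 : ℝ) : ℂ) ≠ 0 := by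
    rw [Complex.ofReal_ne_zero]
    positivity
  have key : a2 ^ 2 = ((t ^ 3 / (1 - t ^ 2) : ℝ) : ℂ) * (c2 + d2) := by
    have ht0 : (t:ℂ) ≠ 0 := by exact_mod_cast htpos.ne'
    have h10 : ((1 - t ^ 2 : ℝ):ℂ) ≠ 0 := by exact_mod_cast h0.ne'
    push_cast at h10
    apply mul_left_cancel₀ hne
    rw [h1]
    push_cast
    field_simp
  set T : ℝ := t ^ 3 / (1 - t ^ 2) with hT
  have hrw : a3 - (eta : ℂ) * a2 ^ 2 =
      (((1 - eta) * T + t / 3 : ℝ) : ℂ) * c2 + (((1 - eta) * T - t / 3 : ℝ) : ℂ) * d2 := by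
    rw [h2, key]
    push_cast
    ring
  have hb : ‖a3 - (eta : ℂ) * a2 ^ 2‖ ≤
      |(1 - eta) * T + t / 3| + |(1 - eta) * T - t / 3| := by
    rw [hrw]
    calc ‖_‖ ≤ ‖(((1 - eta) * T + t / 3 : ℝ) : ℂ) * c2‖
          + ‖(((1 - eta) * T - t / 3 : ℝ) : ℂ) * d2‖ := norm_add_le _ _
      _ ≤ |(1 - eta) * T + t / 3| * 1 + |(1 - eta) * T - t / 3| * 1 := by
          rw [norm_mul, norm_mul, Complex.norm_real, Complex.norm_real, Real.norm_eq_abs, Real.norm_eq_abs]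
          gcongr <;> positivity
      _ = _ := by ring
  have hA : |eta - 1| * T ≥ t / 3 := by
    have : (1 - t ^ 2) / (3 * t ^ 2) * T = t / 3 := by
      rw [hT]; field_simp
    calc |eta - 1| * T ≥ (1 - t ^ 2) / (3 * t ^ 2) * T := by
          apply mul_le_mul_of_nonneg_right heta
          positivity
      _ = t / 3 := this
  have hTeq : 2 * |eta - 1| * t ^ 3 / (1 - t ^ 2) = 2 * (|eta - 1| * T) := by
    rw [hT]; field_simp
  rw [hTeq]
  refine hb.trans ?_
  rcases le_or_gt 0 (eta - 1) with h | h
  · rw [abs_of_nonneg h] at hA ⊢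
    have hx : (1 - eta) * T + t / 3 ≤ 0 := by nlinarith
    have hy : (1 - eta) * T - t / 3 ≤ 0 := by nlinarith
    rw [abs_of_nonpos hx, abs_of_nonpos hy]
    nlinarith
  · rw [abs_of_neg h] at hA ⊢
    have hx : 0 ≤ (1 - eta) * T + t / 3 := by nlinarith
    have hy : 0 ≤ (1 - eta) * T - t / 3 := by nlinarith
    rw [abs_of_nonneg hx, abs_of_nonneg hy]
    nlinarith
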